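/- Fischer decomposition: let k ≥ 0 and fix a sign choice. For every P ∈ Π_k^± there exist lattice functions M_0, M_1, …, M_k with M_s ∈ Π_{k−s}^± and D_h^± M_s = 0 (discrete monogenic polynomials) such that P = Σ_{s=0}^k (mh)^s · M_s, where (mh)^s · M_s denotes the lattice function m ↦ (mh)^s · M_s(m), the s-th power of the Clifford vector mh acting by pointwise left multiplication. -/

import Mathlib

open Finset

noncomputable section

/-- The quadratic form on `ℝⁿ` whose Clifford algebra is `Cl_{0,n}`:
`Q(x) = −(x₁² + ⋯ + xₙ²)`, so that the generators satisfy `eᵢeⱼ + eⱼeᵢ = −2δᵢⱼ`. -/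
def negQ (n : ℕ) : QuadraticForm ℝ (Fin n → ℝ) :=
  QuadraticMap.weightedSumSquares ℝ (fun _ : Fin n => (-1 : ℝ))

/-- The Clifford algebra `Cl_{0,n}`. -/
abbrev Cl (n : ℕ) := CliffordAlgebra (negQ n)

/-- The generators `e i` of `Cl_{0,n}`. -/
def eCl (n : ℕ) (i : Fin n) : Cl n := CliffordAlgebra.ι (negQ n) (Pi.single i 1)

/-- `1` for the forward (upper sign) choice, `-1` for the backward one. -/
def sgn (σ : Bool) : ℝ := if σ then 1 else -1

/-- Forward/backward difference `∂_h^{±i}` of a lattice function with values in a real module. -/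
def fdiff {n : ℕ} {A : Type*} [AddCommGroup A] [Module ℝ A] (σ : Bool) (h : ℝ) (i : Fin n)
    (f : (Fin n → ℤ) → A) : (Fin n → ℤ) → A := fun m =>
  if σ then h⁻¹ • (f (m + Pi.single i 1) - f m) else h⁻¹ • (f m - f (m - Pi.single i 1))

/-- `m ∓ εᵢ` (upper sign paired with the forward difference). -/
def shiftB {n : ℕ} (σ : Bool) (i : Fin n) (m : Fin n → ℤ) : Fin n → ℤ :=
  if σ then m - Pi.single i 1 else m + Pi.single i 1

/-- One-dimensional factorial power `(x)_∓^{(s)} = ∏_{k=0}^{s-1} (x ∓ k h)`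
(upper sign paired with the forward difference `σ = true`). -/
def factPow (σ : Bool) (h x : ℝ) (s : ℕ) : ℝ :=
  ∏ k ∈ range s, (x - sgn σ * k * h)

/-- Multi-index factorial power `(mh)_∓^{(α)}`. -/
def mfp {n : ℕ} (σ : Bool) (h : ℝ) (m : Fin n → ℤ) (α : Fin n → ℕ) : ℝ :=
  ∏ i, factPow σ h (m i * h) (α i)

/-- The difference Dirac operator `D_h^± = Σᵢ eᵢ ∂_h^{±i}`. -/
def Dirac (n : ℕ) (σ : Bool) (h : ℝ) (f : (Fin n → ℤ) → Cl n) : (Fin n → ℤ) → Cl n :=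
  fun m => ∑ i, eCl n i * fdiff σ h i f m

/-- The Clifford vector `mh = Σᵢ (mᵢ h) eᵢ`. -/
def vecCl (n : ℕ) (h : ℝ) (m : Fin n → ℤ) : Cl n := ∑ i, ((m i : ℝ) * h) • eCl n i

/-- The difference Euler operator `(E_h^± f)(m) = Σᵢ (mᵢ h) (∂_h^{±i} f)(m ∓ εᵢ)`. -/
def Euler (n : ℕ) (σ : Bool) (h : ℝ) (f : (Fin n → ℤ) → Cl n) : (Fin n → ℤ) → Cl n :=
  fun m => ∑ i, ((m i : ℝ) * h) • fdiff σ h i f (shiftB σ i m)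

/-- The second-order operator `(A_h^± f)(m) = ∓ h Σᵢ (mᵢ h) (∂_h^{±i} ∂_h^{∓i} f)(m)`. -/
def Aop (n : ℕ) (σ : Bool) (h : ℝ) (f : (Fin n → ℤ) → Cl n) : (Fin n → ℤ) → Cl n :=
  fun m => (-(sgn σ) * h) • ∑ i, ((m i : ℝ) * h) • fdiff σ h i (fdiff (!σ) h i f) m

/-- `L_{jk}^± f = (mⱼ h) ∂_h^{±k} f − (m_k h) ∂_h^{±j} f`. -/
def Lop (n : ℕ) (σ : Bool) (h : ℝ) (j k : Fin n) (f : (Fin n → ℤ) → Cl n) :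
    (Fin n → ℤ) → Cl n :=
  fun m => ((m j : ℝ) * h) • fdiff σ h k f m - ((m k : ℝ) * h) • fdiff σ h j f m

/-- The difference Gamma operator `Γ_h^± f = −Σ_{j<k} eⱼ e_k L_{jk}^± f − A_h^± f`. -/
def Gamma (n : ℕ) (σ : Bool) (h : ℝ) (f : (Fin n → ℤ) → Cl n) : (Fin n → ℤ) → Cl n :=
  fun m => -(∑ j, ∑ k, if j < k then eCl n j * eCl n k * Lop n σ h j k f m else 0)
    - Aop n σ h f m

/-- `B_h^± = ±h Σᵢ ∂_h^{±i}`. -/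
def Bop (n : ℕ) (σ : Bool) (h : ℝ) (f : (Fin n → ℤ) → Cl n) : (Fin n → ℤ) → Cl n :=
  fun m => (sgn σ * h) • ∑ i, fdiff σ h i f m

/-- `(C_h^± f)(m) = Σᵢ (mᵢ h) eᵢ f(m ∓ εᵢ)`. -/
def Cop (n : ℕ) (σ : Bool) (h : ℝ) (f : (Fin n → ℤ) → Cl n) : (Fin n → ℤ) → Cl n :=
  fun m => ∑ i, ((m i : ℝ) * h) • (eCl n i * f (shiftB σ i m))

/-- `V_{h,r}^± = r I + E_h^± − A_h^± + (1/2) B_h^±`. -/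
def Vop (n : ℕ) (σ : Bool) (h r : ℝ) (f : (Fin n → ℤ) → Cl n) : (Fin n → ℤ) → Cl n :=
  fun m => r • f m + Euler n σ h f m - Aop n σ h f m + (1/2 : ℝ) • Bop n σ h f m

/-- `Π_k^±`: the real span of the lattice functions `m ↦ (mh)_∓^{(α)} a` with `|α| ≤ k`. -/
def PiLe (n : ℕ) (σ : Bool) (h : ℝ) (k : ℕ) : Submodule ℝ ((Fin n → ℤ) → Cl n) :=
  Submodule.span ℝ {f | ∃ (α : Fin n → ℕ) (a : Cl n),
    (∑ i, α i) ≤ k ∧ f = fun m => mfp σ h m α • a}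

/-- The space of homogeneous discrete polynomials of degree exactly `k`:
the real span of the lattice functions `m ↦ (mh)_∓^{(α)} a` with `|α| = k`. -/
def PiEq (n : ℕ) (σ : Bool) (h : ℝ) (k : ℕ) : Submodule ℝ ((Fin n → ℤ) → Cl n) :=
  Submodule.span ℝ {f | ∃ (α : Fin n → ℕ) (a : Cl n),
    (∑ i, α i) = k ∧ f = fun m => mfp σ h m α • a}


lemma negQ_apply (n : ℕ) (v : Fin n → ℝ) : negQ n v = -∑ i, v i * v i := by
  simp [negQ, QuadraticMap.weightedSumSquares_apply]

lemma e_sq (n : ℕ) (i : Fin n) : eCl n i * eCl n i = -1 := by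
  rw [eCl, CliffordAlgebra.ι_sq_scalar, negQ_apply]
  have : ∑ j, (Pi.single i (1:ℝ) : Fin n → ℝ) j * (Pi.single i (1:ℝ) : Fin n → ℝ) j = 1 := by
    rw [Finset.sum_eq_single i] <;> simp +contextual [Pi.single_apply]
  rw [this]; simp

lemma single_mul_single (n : ℕ) {i j : Fin n} (hij : i ≠ j) (l : Fin n) :
    (Pi.single i (1:ℝ) : Fin n → ℝ) l * (Pi.single j (1:ℝ) : Fin n → ℝ) l = 0 := by
  rcases eq_or_ne l i with rfl | hli
  · rw [Pi.single_eq_of_ne hij]; exact mul_zero _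
  · rw [Pi.single_eq_of_ne hli]; exact zero_mul _

lemma e_anticomm (n : ℕ) {i j : Fin n} (hij : i ≠ j) :
    eCl n i * eCl n j = -(eCl n j * eCl n i) := by
  have h := CliffordAlgebra.ι_mul_ι_add_swap (Q := negQ n) (Pi.single i 1) (Pi.single j 1)
  have hp : QuadraticMap.polar (negQ n) (Pi.single i 1) (Pi.single j 1) = 0 := by
    rw [QuadraticMap.polar, negQ_apply, negQ_apply, negQ_apply]
    have expand : ∀ l, ((Pi.single i (1:ℝ) + Pi.single j 1 : Fin n → ℝ) l)
        * ((Pi.single i (1:ℝ) + Pi.single j 1 : Fin n → ℝ) l)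
        = (Pi.single i (1:ℝ) : Fin n → ℝ) l * (Pi.single i (1:ℝ) : Fin n → ℝ) l
          + (Pi.single j (1:ℝ) : Fin n → ℝ) l * (Pi.single j (1:ℝ) : Fin n → ℝ) l
          + 2 * ((Pi.single i (1:ℝ) : Fin n → ℝ) l * (Pi.single j (1:ℝ) : Fin n → ℝ) l) := by
      intro l; simp only [Pi.add_apply]; ring
    rw [Finset.sum_congr rfl fun l _ => expand l, Finset.sum_add_distrib]
    have : ∑ l, 2 * ((Pi.single i (1:ℝ) : Fin n → ℝ) l * (Pi.single j (1:ℝ) : Fin n → ℝ) l) = 0 :=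
      Finset.sum_eq_zero fun l _ => by rw [single_mul_single n hij l, mul_zero]
    rw [this]
    rw [Finset.sum_add_distrib]
    ring_nf
  rw [hp] at h
  simp only [map_zero] at h
  rw [eCl, eCl]
  linear_combination (norm := noncomm_ring) h

lemma sgn_true : sgn true = 1 := rfl
lemma sgn_false : sgn false = -1 := rfl

lemma factPow_zero (σ : Bool) (h x : ℝ) : factPow σ h x 0 = 1 := by simp [factPow]

lemma factPow_succ (σ : Bool) (h x : ℝ) (t : ℕ) :
    factPow σ h x (t + 1) = factPow σ h x t * (x - sgn σ * t * h) := by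
  rw [factPow, Finset.prod_range_succ, factPow]

lemma factPow_shift_true (h x : ℝ) (t : ℕ) :
    factPow true h (x + h) (t + 1) = (x + h) * factPow true h x t := by
  rw [factPow, Finset.prod_range_succ', factPow]
  have h1 : ∀ k ∈ range t,
      x + h - sgn true * ((k + 1 : ℕ) : ℝ) * h = x - sgn true * (k : ℝ) * h := by
    intro k _; rw [sgn_true]; push_cast; ring
  rw [Finset.prod_congr rfl h1]
  simp [sgn_true]
  ring

lemma factPow_shift_false (h x : ℝ) (t : ℕ) :
    factPow false h (x - h) (t + 1) = (x - h) * factPow false h x t := by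
  rw [factPow, Finset.prod_range_succ', factPow]
  have h1 : ∀ k ∈ range t,
      x - h - sgn false * ((k + 1 : ℕ) : ℝ) * h = x - sgn false * (k : ℝ) * h := by
    intro k _; rw [sgn_false]; push_cast; ring
  rw [Finset.prod_congr rfl h1]
  simp [sgn_false]
  ring

lemma factPow_diff_true (h x : ℝ) (t : ℕ) :
    factPow true h (x + h) (t + 1) - factPow true h x (t + 1)
      = (t + 1 : ℝ) * h * factPow true h x t := by
  rw [factPow_shift_true, factPow_succ, sgn_true]
  ring

lemma factPow_diff_false (h x : ℝ) (t : ℕ) :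
    factPow false h x (t + 1) - factPow false h (x - h) (t + 1)
      = (t + 1 : ℝ) * h * factPow false h x t := by
  rw [factPow_shift_false, factPow_succ, sgn_false]
  ring

lemma factPow_mul_x (σ : Bool) (h x : ℝ) (s : ℕ) :
    x * factPow σ h x s = factPow σ h x (s + 1) + sgn σ * s * h * factPow σ h x s := by
  rw [factPow_succ]; ring

namespace Fischer
variable {n : ℕ}

abbrev Idx (n : ℕ) := Fin n → ℕ
def eps (n : ℕ) (i : Fin n) : Idx n := Pi.single i 1
def deg (α : Idx n) : ℕ := ∑ i, α i
abbrev Wm (n : ℕ) := Idx n → Cl n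

lemma eps_apply (i l : Fin n) : eps n i l = if l = i then 1 else 0 := by
  simp [eps, Pi.single_apply]

lemma e_mul_e_mul (i : Fin n) (x : Cl n) : eCl n i * (eCl n i * x) = -x := by
  rw [← mul_assoc, e_sq]; simp

lemma e_mul_e_mul_anticomm {i j : Fin n} (hij : i ≠ j) (x : Cl n) :
    eCl n i * (eCl n j * x) = -(eCl n j * (eCl n i * x)) := by
  rw [← mul_assoc, e_anticomm n hij, ← mul_assoc]; simp

lemma deg_add_eps (β : Idx n) (i : Fin n) : deg (β + eps n i) = deg β + 1 := by
  simp only [deg, Pi.add_apply, Finset.sum_add_distrib]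
  congr 1
  simp [eps_apply]

lemma sub_eps_apply (β : Idx n) (i l : Fin n) :
    (β - eps n i) l = β l - (if l = i then 1 else 0) := by
  simp [Pi.sub_apply, eps_apply]

lemma deg_sub_eps {β : Idx n} {i : Fin n} (h : 1 ≤ β i) : deg (β - eps n i) + 1 = deg β := by
  have : ∀ l, (β - eps n i) l + eps n i l = β l := by
    intro l
    rcases eq_or_ne l i with rfl | hl
    · simp [sub_eps_apply, eps_apply]; omega
    · simp [sub_eps_apply, eps_apply, hl]
  calc deg (β - eps n i) + 1 = ∑ l, ((β - eps n i) l + eps n i l) := by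
        simp only [deg, Finset.sum_add_distrib]
        congr 1
        simp [eps_apply]
      _ = deg β := by simp only [deg]; exact Finset.sum_congr rfl fun l _ => this l

lemma add_sub_eps (β : Idx n) (i : Fin n) : β + eps n i - eps n i = β := by
  funext l; simp only [Pi.add_apply, sub_eps_apply, eps_apply]
  split <;> omega

lemma sub_add_eps {β : Idx n} {i : Fin n} (h : 1 ≤ β i) : β - eps n i + eps n i = β := by
  funext l; simp only [Pi.add_apply, sub_eps_apply, eps_apply]
  rcases eq_or_ne l i with rfl | hl
  · simp; omega
  · simp [hl]

lemma add_eps_sub_eps {i j : Fin n} (hij : i ≠ j) (β : Idx n) :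
    β + eps n j - eps n i = β - eps n i + eps n j := by
  funext l
  simp only [Pi.add_apply, Pi.sub_apply, eps_apply]
  rcases eq_or_ne l i with rfl | hli <;> rcases eq_or_ne l j with rfl | hlj <;>
    simp_all <;> omega

def Dm (n : ℕ) (w : Wm n) : Wm n :=
  fun β => ∑ i, ((β i + 1 : ℕ) : ℝ) • (eCl n i * w (β + eps n i))
def X0 (n : ℕ) (w : Wm n) : Wm n :=
  fun β => ∑ i, if 1 ≤ β i then eCl n i * w (β - eps n i) else 0
def Nm (n : ℕ) (w : Wm n) : Wm n :=
  fun β => ∑ i, ((β i : ℕ) : ℝ) • (eCl n i * w β)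
def Xc (n : ℕ) (c : ℝ) (w : Wm n) : Wm n := fun β => X0 n w β + c • Nm n w β

def Poly (n d : ℕ) (w : Wm n) : Prop := ∀ β, deg β ≠ d → w β = 0
def Wle (n k : ℕ) (w : Wm n) : Prop := ∀ β, k < deg β → w β = 0

lemma I1 (w : Wm n) (β : Idx n) :
    Dm n (X0 n w) β + X0 n (Dm n w) β = (-(2 * (deg β : ℝ) + n)) • w β := by
  have expand1 : Dm n (X0 n w) β = ∑ j, ∑ i, ((β j + 1 : ℕ) : ℝ) •
      (if 1 ≤ (β + eps n j) i then eCl n j * (eCl n i * w (β + eps n j - eps n i)) else 0) := by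
    simp [Dm, X0, Finset.mul_sum, mul_ite, mul_zero, Finset.smul_sum]
  have expand2 : X0 n (Dm n w) β = ∑ j, ∑ i, (if 1 ≤ β i then
      (((β - eps n i) j + 1 : ℕ) : ℝ) • (eCl n i * (eCl n j * w (β - eps n i + eps n j)))
      else 0) := by
    rw [X0, Finset.sum_comm]
    refine Finset.sum_congr rfl fun i _ => ?_
    rw [Dm]
    split
    · rw [Finset.mul_sum]
      refine Finset.sum_congr rfl fun j _ => ?_
      rw [mul_smul_comm]
    · simp
  rw [expand1, expand2, ← Finset.sum_add_distrib]
  have hrow : ∀ j, (∑ i, ((β j + 1 : ℕ) : ℝ) •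
      (if 1 ≤ (β + eps n j) i then eCl n j * (eCl n i * w (β + eps n j - eps n i)) else 0))
      + (∑ i, (if 1 ≤ β i then
      (((β - eps n i) j + 1 : ℕ) : ℝ) • (eCl n i * (eCl n j * w (β - eps n i + eps n j)))
      else 0))
      = -(((2 * β j + 1 : ℕ) : ℝ)) • w β := by
    intro j
    rw [← Finset.sum_add_distrib]
    have key : ∀ i, (((β j + 1 : ℕ) : ℝ) •
        (if 1 ≤ (β + eps n j) i then eCl n j * (eCl n i * w (β + eps n j - eps n i)) else 0))
        + (if 1 ≤ β i then
        (((β - eps n i) j + 1 : ℕ) : ℝ) • (eCl n i * (eCl n j * w (β - eps n i + eps n j)))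
        else 0)
        = if i = j then -(((2 * β j + 1 : ℕ) : ℝ)) • w β else 0 := by
      intro i
      rcases eq_or_ne i j with rfl | hij
      · -- diagonal
        have hg : 1 ≤ (β + eps n i) i := by simp [Pi.add_apply, eps_apply]
        rw [if_pos hg, if_pos rfl, add_sub_eps, e_mul_e_mul]
        rcases Nat.eq_zero_or_pos (β i) with h0 | h1
        · rw [if_neg (by omega)]
          simp [h0]
        · have h1' : 1 ≤ β i := h1
          rw [if_pos h1', sub_add_eps h1', e_mul_e_mul]
          have h2 : ((β - eps n i) i + 1 : ℕ) = β i := by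
            rw [sub_eps_apply]; simp; omega
          rw [h2]
          rw [smul_neg, smul_neg, ← neg_add, ← add_smul, neg_smul]
          congr 2
          push_cast [h1]
          ring
      · -- off-diagonal: cancellation
        have hg : (β + eps n j) i = β i := by simp [Pi.add_apply, eps_apply, hij]
        rw [if_neg hij, hg]
        rcases Nat.lt_or_ge (β i) 1 with h0 | h1
        · rw [if_neg (by omega), if_neg (by omega)]
          simp
        · rw [if_pos h1, if_pos h1]
          have harg : β + eps n j - eps n i = β - eps n i + eps n j := add_eps_sub_eps hij β
          have hco : ((β - eps n i) j + 1 : ℕ) = β j + 1 := by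
            rw [sub_eps_apply, if_neg (Ne.symm hij), Nat.sub_zero]
          rw [harg, hco, e_mul_e_mul_anticomm hij, smul_neg]
          exact add_neg_cancel _
    rw [Finset.sum_congr rfl fun i _ => key i]
    rw [Finset.sum_ite_eq' Finset.univ j]
    simp
  rw [Finset.sum_congr rfl fun j _ => hrow j]
  have : ∑ j, -(((2 * β j + 1 : ℕ) : ℝ)) • w β = (∑ j, -(((2 * β j + 1 : ℕ) : ℝ))) • w β := by
    rw [Finset.sum_smul]
  rw [this]
  simp only [deg, Nat.cast_sum]
  push_cast
  rw [Finset.sum_neg_distrib]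
  congr 1
  rw [Finset.sum_add_distrib, ← Finset.mul_sum]
  simp [Finset.card_univ]

-- linearity
lemma Dm_add (u v : Wm n) : Dm n (u + v) = Dm n u + Dm n v := by
  funext β; simp [Dm, mul_add, smul_add, Finset.sum_add_distrib]
lemma Dm_smul (c : ℝ) (u : Wm n) : Dm n (c • u) = c • Dm n u := by
  funext β; simp [Dm, mul_smul_comm, smul_comm c, Finset.smul_sum]
lemma Dm_zero : Dm n 0 = 0 := by funext β; simp [Dm]
lemma Dm_sub (u v : Wm n) : Dm n (u - v) = Dm n u - Dm n v := by
  funext β; simp [Dm, mul_sub, smul_sub, Finset.sum_sub_distrib]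
lemma Dm_sum {ι : Type*} (t : Finset ι) (f : ι → Wm n) :
    Dm n (∑ s ∈ t, f s) = ∑ s ∈ t, Dm n (f s) := by
  classical
  induction t using Finset.induction_on with
  | empty => simp [Dm_zero]
  | insert a t' hx ih => rw [Finset.sum_insert hx, Dm_add, ih, Finset.sum_insert hx]

lemma X0_add (u v : Wm n) : X0 n (u + v) = X0 n u + X0 n v := by
  funext β
  simp only [X0, Pi.add_apply, ← Finset.sum_add_distrib]
  refine Finset.sum_congr rfl fun i _ => ?_
  split <;> simp [mul_add]
lemma X0_smul (c : ℝ) (u : Wm n) : X0 n (c • u) = c • X0 n u := by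
  funext β
  simp only [X0, Pi.smul_apply, Finset.smul_sum]
  refine Finset.sum_congr rfl fun i _ => ?_
  split <;> simp [mul_smul_comm]
lemma X0_zero : X0 n 0 = 0 := by
  funext β; simp only [X0, Pi.zero_apply, mul_zero, ite_self]; simp
lemma X0_sum {ι : Type*} (t : Finset ι) (f : ι → Wm n) :
    X0 n (∑ s ∈ t, f s) = ∑ s ∈ t, X0 n (f s) := by
  classical
  induction t using Finset.induction_on with
  | empty => simp [X0_zero]
  | insert a t' hx ih => rw [Finset.sum_insert hx, X0_add, ih, Finset.sum_insert hx]
lemma X0_iter_smul (s : ℕ) (c : ℝ) (u : Wm n) : (X0 n)^[s] (c • u) = c • (X0 n)^[s] u := by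
  induction s generalizing u with
  | zero => simp
  | succ s ih => rw [Function.iterate_succ_apply, X0_smul, ih, ← Function.iterate_succ_apply]

lemma Nm_add (u v : Wm n) : Nm n (u + v) = Nm n u + Nm n v := by
  funext β; simp [Nm, mul_add, smul_add, Finset.sum_add_distrib]
lemma Nm_smul (c : ℝ) (u : Wm n) : Nm n (c • u) = c • Nm n u := by
  funext β; simp [Nm, mul_smul_comm, smul_comm c, Finset.smul_sum]

lemma Xc_add (c : ℝ) (u v : Wm n) : Xc n c (u + v) = Xc n c u + Xc n c v := by
  funext β; simp only [Xc, X0_add, Nm_add, Pi.add_apply, smul_add]; abel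
lemma Xc_zero (c : ℝ) : Xc n c 0 = 0 := by
  funext β
  have h1 : Nm n (0 : Wm n) = 0 := by funext γ; simp [Nm]
  simp [Xc, X0_zero, h1]
lemma Xc_sum {ι : Type*} (c : ℝ) (t : Finset ι) (f : ι → Wm n) :
    Xc n c (∑ s ∈ t, f s) = ∑ s ∈ t, Xc n c (f s) := by
  classical
  induction t using Finset.induction_on with
  | empty => simp [Xc_zero]
  | insert a t' hx ih => rw [Finset.sum_insert hx, Xc_add, ih, Finset.sum_insert hx]

-- grading
lemma poly_zero_fn (d : ℕ) : Poly n d (0 : Wm n) := fun _ _ => rfl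
lemma poly_smul {d : ℕ} {w : Wm n} (c : ℝ) (hw : Poly n d w) : Poly n d (c • w) := by
  intro β hβ; simp [Pi.smul_apply, hw β hβ]
lemma poly_sub {d : ℕ} {u v : Wm n} (hu : Poly n d u) (hv : Poly n d v) : Poly n d (u - v) := by
  intro β hβ; simp [Pi.sub_apply, hu β hβ, hv β hβ]
lemma poly_sum {ι : Type*} {d : ℕ} (t : Finset ι) {f : ι → Wm n}
    (hf : ∀ s ∈ t, Poly n d (f s)) : Poly n d (∑ s ∈ t, f s) := by
  intro β hβ
  simp only [Finset.sum_apply]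
  exact Finset.sum_eq_zero fun s hs => hf s hs β hβ

lemma poly_X0 {d : ℕ} {w : Wm n} (hw : Poly n d w) : Poly n (d + 1) (X0 n w) := by
  intro β hβ
  refine Finset.sum_eq_zero fun i _ => ?_
  split
  · rename_i hg
    rw [hw (β - eps n i) (by have := deg_sub_eps (β := β) (i := i) hg; omega), mul_zero]
  · rfl
lemma poly_X0_iter {d : ℕ} {w : Wm n} (s : ℕ) (hw : Poly n d w) :
    Poly n (d + s) ((X0 n)^[s] w) := by
  induction s with
  | zero => simpa using hw
  | succ s ih => rw [Function.iterate_succ_apply']; exact (by simpa [Nat.add_assoc] using poly_X0 ih)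

lemma poly_Nm {d : ℕ} {w : Wm n} (hw : Poly n d w) : Poly n d (Nm n w) := by
  intro β hβ
  refine Finset.sum_eq_zero fun i _ => ?_
  rw [hw β hβ, mul_zero, smul_zero]
lemma poly_Dm {d : ℕ} {w : Wm n} (hw : Poly n (d + 1) w) : Poly n d (Dm n w) := by
  intro β hβ
  refine Finset.sum_eq_zero fun i _ => ?_
  rw [hw (β + eps n i) (by rw [deg_add_eps]; omega), mul_zero, smul_zero]
lemma poly_zero_Dm {w : Wm n} (hw : Poly n 0 w) : Dm n w = 0 := by
  funext β
  refine Finset.sum_eq_zero fun i _ => ?_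
  rw [hw (β + eps n i) (by rw [deg_add_eps]; omega), mul_zero, smul_zero]
lemma poly_zero_Nm {w : Wm n} (hw : Poly n 0 w) : Nm n w = 0 := by
  funext β
  refine Finset.sum_eq_zero fun i _ => ?_
  by_cases hd : deg β = 0
  · have : β i = 0 := by
      have := Finset.sum_eq_zero_iff.mp (hd : ∑ l, β l = 0) i (Finset.mem_univ i)
      exact this
    simp [this]
  · rw [hw β hd, mul_zero, smul_zero]

lemma wle_mono {k K : ℕ} (hkK : k ≤ K) {w : Wm n} (hw : Wle n k w) : Wle n K w :=
  fun β hβ => hw β (lt_of_le_of_lt hkK hβ)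
lemma poly_wle {d : ℕ} {w : Wm n} (hw : Poly n d w) : Wle n d w :=
  fun β hβ => hw β (by omega)
lemma wle_sub {k : ℕ} {u v : Wm n} (hu : Wle n k u) (hv : Wle n k v) : Wle n k (u - v) := by
  intro β hβ; simp [Pi.sub_apply, hu β hβ, hv β hβ]
lemma wle_smul {k : ℕ} (c : ℝ) {w : Wm n} (hw : Wle n k w) : Wle n k (c • w) := by
  intro β hβ; simp [Pi.smul_apply, hw β hβ]
lemma wle_X0 {k : ℕ} {w : Wm n} (hw : Wle n k w) : Wle n (k + 1) (X0 n w) := by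
  intro β hβ
  refine Finset.sum_eq_zero fun i _ => ?_
  split
  · rename_i hg
    rw [hw (β - eps n i) (by have := deg_sub_eps (β := β) (i := i) hg; omega), mul_zero]
  · rfl
lemma wle_Nm {k : ℕ} {w : Wm n} (hw : Wle n k w) : Wle n k (Nm n w) := by
  intro β hβ
  refine Finset.sum_eq_zero fun i _ => ?_
  rw [hw β hβ, mul_zero, smul_zero]
lemma wle_Xc {k : ℕ} (c : ℝ) {w : Wm n} (hw : Wle n k w) : Wle n (k + 1) (Xc n c w) := by
  intro β hβ
  simp only [Xc]
  rw [wle_X0 hw β hβ, wle_Nm (wle_mono (Nat.le_succ k) hw) β hβ, smul_zero, add_zero]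
lemma wle_Xc_iter {k : ℕ} (c : ℝ) (s : ℕ) {w : Wm n} (hw : Wle n k w) :
    Wle n (k + s) ((Xc n c)^[s] w) := by
  induction s with
  | zero => simpa using hw
  | succ s ih =>
    rw [Function.iterate_succ_apply']
    simpa [Nat.add_assoc] using wle_Xc c ih
lemma wle_Dm {k : ℕ} {w : Wm n} (hw : Wle n (k + 1) w) : Wle n k (Dm n w) := by
  intro β hβ
  refine Finset.sum_eq_zero fun i _ => ?_
  rw [hw (β + eps n i) (by rw [deg_add_eps]; omega), mul_zero, smul_zero]

def gam (n t : ℕ) : ℕ → ℝ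
  | 0 => 0
  | s + 1 => -(2 * ((t : ℝ) + s) + n) - gam n t s

lemma gam_closed (t : ℕ) (s : ℕ) :
    gam n t s = if Even s then -(s : ℝ) else -((2 * t + n + s : ℝ) - 1) := by
  induction s with
  | zero => simp [gam]
  | succ s ih =>
    rw [gam, ih]
    by_cases hs : Even s
    · rw [if_pos hs, if_neg (by simpa [Nat.even_add_one] using hs)]
      push_cast; ring
    · rw [if_neg hs, if_pos (by simpa [Nat.even_add_one] using hs)]
      push_cast; ring

lemma gam_ne_zero (hn : 1 ≤ n) (t : ℕ) {s : ℕ} (hs : 1 ≤ s) : gam n t s ≠ 0 := by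
  rw [gam_closed]
  split
  · have : s ≠ 0 := by omega
    simpa using fun hh => this (by exact_mod_cast hh)
  · have h1 : (2 * (t:ℝ) + n + s) - 1 ≥ 1 := by
      have hn' : (1:ℝ) ≤ n := by exact_mod_cast hn
      have hs' : (1:ℝ) ≤ s := by exact_mod_cast hs
      have ht' : (0:ℝ) ≤ t := by positivity
      linarith
    intro hh
    have : (2 * (t:ℝ) + n + s) - 1 = 0 := by linarith [neg_eq_zero.mp hh]
    linarith

lemma H2 (t : ℕ) {u : Wm n} (hu : Dm n u = 0) (hp : Poly n t u) :
    ∀ s : ℕ, Dm n ((X0 n)^[s + 1] u) = gam n t (s + 1) • (X0 n)^[s] u := by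
  intro s
  induction s with
  | zero =>
    funext β
    have hI := I1 u β
    rw [hu] at hI
    simp only [X0_zero, Pi.zero_apply, add_zero] at hI
    simp only [zero_add, Function.iterate_one, Function.iterate_zero, id_eq]
    rw [hI, Pi.smul_apply]
    by_cases hβ : u β = 0
    · rw [hβ]; simp
    · have : deg β = t := by by_contra hne; exact hβ (hp β hne)
      rw [this, gam, gam]
      norm_num
  | succ s ih =>
    have hv : (X0 n)^[s + 1 + 1] u = X0 n ((X0 n)^[s + 1] u) := Function.iterate_succ_apply' _ _ _
    have hpv : Poly n (t + (s + 1)) ((X0 n)^[s + 1] u) := poly_X0_iter (s + 1) hp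
    have hDv : X0 n (Dm n ((X0 n)^[s + 1] u)) = gam n t (s + 1) • (X0 n)^[s + 1] u := by
      rw [ih, X0_smul]
      congr 1
      exact (Function.iterate_succ_apply' _ _ _).symm
    funext β
    rw [hv]
    have hI := I1 ((X0 n)^[s + 1] u) β
    rw [hDv] at hI
    have hmain : Dm n (X0 n ((X0 n)^[s + 1] u)) β
        = (-(2 * (deg β : ℝ) + n)) • (X0 n)^[s + 1] u β
          - gam n t (s + 1) • (X0 n)^[s + 1] u β := by
      have h' := eq_sub_of_add_eq hI
      simpa using h'
    rw [hmain, Pi.smul_apply]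
    by_cases hβ : (X0 n)^[s + 1] u β = 0
    · rw [hβ]; simp
    · have hd : deg β = t + (s + 1) := by
        by_contra hne; exact hβ (hpv β hne)
      have hco : (-(2 * (deg β : ℝ) + n)) = -(2 * ((t : ℝ) + (s + 1)) + n) := by
        rw [hd]; push_cast; ring
      rw [hco]
      have hg : gam n t (s + 1 + 1) = -(2 * ((t : ℝ) + (s + 1)) + n) - gam n t (s + 1) := by
        rw [gam]; push_cast; ring
      rw [hg, sub_smul]

lemma homog_fischer (hn : 1 ≤ n) :
    ∀ d : ℕ, ∀ w : Wm n, Poly n d w → ∃ M : ℕ → Wm n,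
      (∀ s, Poly n (d - s) (M s) ∧ Dm n (M s) = 0) ∧
      w = ∑ s ∈ Finset.range (d + 1), (X0 n)^[s] (M s) := by
  intro d
  induction d using Nat.strong_induction_on with
  | _ d ih =>
    intro w hw
    match d with
    | 0 =>
      refine ⟨fun s => if s = 0 then w else 0, fun s => ?_, by simp⟩
      rcases eq_or_ne s 0 with rfl | hs
      · exact ⟨by simpa using hw, by simp [poly_zero_Dm hw]⟩
      · exact ⟨by simp [hs, poly_zero_fn], by simp [hs, Dm_zero]⟩
    | d' + 1 =>
      have hg : Poly n d' (Dm n w) := poly_Dm hw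
      obtain ⟨M', hM', hsum⟩ := ih d' (by omega) (Dm n w) hg
      set v : Wm n := ∑ s ∈ Finset.range (d' + 1),
        (gam n (d' - s) (s + 1))⁻¹ • (X0 n)^[s + 1] (M' s) with hvdef
      have hDv : Dm n v = Dm n w := by
        rw [hvdef, Dm_sum]
        rw [hsum]
        refine Finset.sum_congr rfl fun s hs => ?_
        rw [Dm_smul, H2 (d' - s) (hM' s).2 (hM' s).1 s, smul_smul,
          inv_mul_cancel₀ (gam_ne_zero hn (d' - s) (by omega)), one_smul]
      have hvpoly : Poly n (d' + 1) v := by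
        refine poly_sum _ fun s hs => poly_smul _ ?_
        have := poly_X0_iter (s + 1) (hM' s).1
        have hd : d' - s + (s + 1) = d' + 1 := by
          have := Finset.mem_range.mp hs; omega
        rwa [hd] at this
      refine ⟨fun s => match s with
        | 0 => w - v
        | s + 1 => (gam n (d' - s) (s + 1))⁻¹ • M' s, fun s => ?_, ?_⟩
      · match s with
        | 0 => exact ⟨by simpa using poly_sub hw hvpoly, by rw [Dm_sub, hDv, sub_self]⟩
        | s + 1 =>
          constructor
          · have : d' + 1 - (s + 1) = d' - s := by omega
            rw [this]
            exact poly_smul _ (hM' s).1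
          · rw [Dm_smul, (hM' s).2, smul_zero]
      · rw [Finset.sum_range_succ']
        simp only [Function.iterate_zero, id_eq]
        have : ∀ s, (X0 n)^[s + 1] ((gam n (d' - s) (s + 1))⁻¹ • M' s)
            = (gam n (d' - s) (s + 1))⁻¹ • (X0 n)^[s + 1] (M' s) := fun s => X0_iter_smul _ _ _
        rw [Finset.sum_congr rfl fun s _ => this s]
        rw [← hvdef]
        abel

lemma homog_solve (hn : 1 ≤ n) (d : ℕ) (g : Wm n) (hg : Poly n d g) :
    ∃ Q : Wm n, Poly n d Q ∧ Dm n (X0 n Q) = g := by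
  obtain ⟨M, hM, hsum⟩ := homog_fischer hn d g hg
  refine ⟨∑ s ∈ Finset.range (d + 1), (gam n (d - s) (s + 1))⁻¹ • (X0 n)^[s] (M s), ?_, ?_⟩
  · refine poly_sum _ fun s hs => poly_smul _ ?_
    have := poly_X0_iter s (hM s).1
    have hd : d - s + s = d := by have := Finset.mem_range.mp hs; omega
    rwa [hd] at this
  · rw [X0_sum, Dm_sum, hsum]
    refine Finset.sum_congr rfl fun s hs => ?_
    rw [X0_smul, Dm_smul]
    have : X0 n ((X0 n)^[s] (M s)) = (X0 n)^[s + 1] (M s) :=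
      (Function.iterate_succ_apply' _ _ _).symm
    rw [this, H2 (d - s) (hM s).2 (hM s).1 s, smul_smul,
      inv_mul_cancel₀ (gam_ne_zero hn (d - s) (by omega)), one_smul]

def hcomp (n d : ℕ) (g : Wm n) : Wm n := fun β => if deg β = d then g β else 0

lemma poly_hcomp (d : ℕ) (g : Wm n) : Poly n d (hcomp n d g) := by
  intro β hβ; simp [hcomp, hβ]

lemma wle_rest {k : ℕ} {g : Wm n} (hg : Wle n (k + 1) g) :
    Wle n k (g - hcomp n (k + 1) g) := by
  intro β hβ
  simp only [Pi.sub_apply, hcomp]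
  rcases eq_or_ne (deg β) (k + 1) with hd | hd
  · rw [if_pos hd, sub_self]
  · rw [if_neg hd, hg β (by omega), sub_zero]

lemma wle_zero_poly {g : Wm n} (hg : Wle n 0 g) : Poly n 0 g := fun β hβ => hg β (by omega)

lemma solve (hn : 1 ≤ n) (c : ℝ) :
    ∀ j : ℕ, ∀ g : Wm n, Wle n j g → ∃ Q : Wm n, Wle n j Q ∧ Dm n (Xc n c Q) = g := by
  intro j
  induction j with
  | zero =>
    intro g hg
    obtain ⟨Q, hQp, hQd⟩ := homog_solve hn 0 g (wle_zero_poly hg)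
    refine ⟨Q, poly_wle hQp, ?_⟩
    have hN : Nm n Q = 0 := poly_zero_Nm hQp
    have : Xc n c Q = X0 n Q := by funext β; simp [Xc, hN]
    rw [this, hQd]
  | succ j ihj =>
    intro g hg
    set gt := hcomp n (j + 1) g with hgt
    obtain ⟨Qt, hQtp, hQtd⟩ := homog_solve hn (j + 1) gt (poly_hcomp _ _)
    have hr1 : Wle n j (g - gt) := wle_rest hg
    have hr2 : Wle n j (Dm n (Nm n Qt)) :=
      wle_Dm (poly_wle (poly_Nm hQtp))
    obtain ⟨Q', hQ'w, hQ'd⟩ := ihj (g - gt - c • Dm n (Nm n Qt))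
      (wle_sub hr1 (wle_smul c hr2))
    refine ⟨Qt + Q', ?_, ?_⟩
    · intro β hβ
      have h1 : Qt β = 0 := poly_wle hQtp β hβ
      have h2 : Q' β = 0 := hQ'w β (by omega)
      simp [h1, h2]
    · rw [Xc_add, Dm_add, hQ'd]
      have : Dm n (Xc n c Qt) = gt + c • Dm n (Nm n Qt) := by
        have hx : Xc n c Qt = X0 n Qt + c • Nm n Qt := by funext β; simp [Xc]
        rw [hx, Dm_add, hQtd, Dm_smul]
      rw [this]
      abel

lemma model_fischer (hn : 1 ≤ n) (c : ℝ) :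
    ∀ k : ℕ, ∀ w : Wm n, Wle n k w → ∃ M : ℕ → Wm n,
      (∀ s, Wle n (k - s) (M s) ∧ Dm n (M s) = 0) ∧
      w = ∑ s ∈ Finset.range (k + 1), (Xc n c)^[s] (M s) := by
  intro k
  induction k with
  | zero =>
    intro w hw
    refine ⟨fun s => if s = 0 then w else 0, fun s => ?_, by simp⟩
    rcases eq_or_ne s 0 with rfl | hs
    · exact ⟨by simpa using hw, poly_zero_Dm (wle_zero_poly hw)⟩
    · refine ⟨?_, by simp [hs, Dm_zero]⟩
      simp only [hs, if_neg hs]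
      exact fun β _ => rfl
  | succ k ihk =>
    intro w hw
    obtain ⟨Q, hQw, hQd⟩ := solve hn c k (Dm n w) (wle_Dm hw)
    obtain ⟨M', hM', hsum⟩ := ihk Q hQw
    refine ⟨fun s => match s with
      | 0 => w - Xc n c Q
      | s + 1 => M' s, fun s => ?_, ?_⟩
    · match s with
      | 0 =>
        refine ⟨by simpa using wle_sub hw (wle_Xc c hQw), ?_⟩
        rw [Dm_sub, hQd, sub_self]
      | s + 1 =>
        have : k + 1 - (s + 1) = k - s := by omega
        rw [this]
        exact hM' s
    · rw [Finset.sum_range_succ']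
      simp only [Function.iterate_zero, id_eq]
      have : ∀ s, (Xc n c)^[s + 1] (M' s) = Xc n c ((Xc n c)^[s] (M' s)) :=
        fun s => Function.iterate_succ_apply' _ _ _
      rw [Finset.sum_congr rfl fun s _ => this s, ← Xc_sum, ← hsum]
      abel

end Fischer

namespace Fischer
variable {n : ℕ}

-- multi-index factorial power lemmas
lemma mfp_split (σ : Bool) (h : ℝ) (m : Fin n → ℤ) (α : Idx n) (i : Fin n) :
    mfp σ h m α = factPow σ h ((m i : ℝ) * h) (α i)
      * ∏ j ∈ Finset.univ.erase i, factPow σ h ((m j : ℝ) * h) (α j) :=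
  (Finset.mul_prod_erase Finset.univ _ (Finset.mem_univ i)).symm

lemma erase_prod_eq (σ : Bool) (h : ℝ) {m m' : Fin n → ℤ} (i : Fin n)
    (hmm : ∀ j, j ≠ i → m' j = m j) (α β : Idx n) (hab : ∀ j, j ≠ i → α j = β j) :
    ∏ j ∈ Finset.univ.erase i, factPow σ h ((m' j : ℝ) * h) (α j)
      = ∏ j ∈ Finset.univ.erase i, factPow σ h ((m j : ℝ) * h) (β j) :=
  Finset.prod_congr rfl fun j hj => by
    rw [hmm j (Finset.ne_of_mem_erase hj), hab j (Finset.ne_of_mem_erase hj)]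

lemma coord_add (m : Fin n → ℤ) (i : Fin n) : (m + Pi.single i 1 : Fin n → ℤ) i = m i + 1 := by
  simp
lemma coord_sub (m : Fin n → ℤ) (i : Fin n) : (m - Pi.single i 1 : Fin n → ℤ) i = m i - 1 := by
  simp
lemma coord_add' (m : Fin n → ℤ) {i j : Fin n} (hj : j ≠ i) :
    (m + Pi.single i 1 : Fin n → ℤ) j = m j := by
  simp [Pi.single_eq_of_ne hj]
lemma coord_sub' (m : Fin n → ℤ) {i j : Fin n} (hj : j ≠ i) :
    (m - Pi.single i 1 : Fin n → ℤ) j = m j := by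
  simp [Pi.single_eq_of_ne hj]

lemma sub_eps_self (α : Idx n) (i : Fin n) : (α - eps n i) i = α i - 1 := by
  rw [sub_eps_apply, if_pos rfl]
lemma sub_eps_other (α : Idx n) {i j : Fin n} (hj : j ≠ i) : (α - eps n i) j = α j := by
  rw [sub_eps_apply, if_neg hj, Nat.sub_zero]
lemma add_eps_self (α : Idx n) (i : Fin n) : (α + eps n i) i = α i + 1 := by
  simp [Pi.add_apply, eps_apply]
lemma add_eps_other (α : Idx n) {i j : Fin n} (hj : j ≠ i) : (α + eps n i) j = α j := by
  simp [Pi.add_apply, eps_apply, hj]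

lemma mfp_coeff_true {h : ℝ} (hh : h ≠ 0) (m : Fin n → ℤ) (α : Idx n) (i : Fin n) :
    h⁻¹ * (mfp true h (m + Pi.single i 1) α - mfp true h m α)
      = ((α i : ℕ) : ℝ) * mfp true h m (α - eps n i) := by
  rw [mfp_split true h (m + Pi.single i 1) α i, mfp_split true h m α i,
    mfp_split true h m (α - eps n i) i,
    erase_prod_eq true h i (fun j hj => coord_add' m hj) α α (fun _ _ => rfl),
    erase_prod_eq true h i (fun j _ => rfl) (α - eps n i) α (fun j hj => sub_eps_other α hj)]
  have hx : (((m + Pi.single i 1 : Fin n → ℤ) i : ℤ) : ℝ) * h = (m i : ℝ) * h + h := by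
    rw [coord_add]; push_cast; ring
  rw [hx, sub_eps_self]
  cases hα : α i with
  | zero => simp [factPow_zero]
  | succ t =>
    rw [Nat.succ_sub_one, ← sub_mul, factPow_diff_true]
    field_simp
    push_cast; ring

lemma mfp_coeff_false {h : ℝ} (hh : h ≠ 0) (m : Fin n → ℤ) (α : Idx n) (i : Fin n) :
    h⁻¹ * (mfp false h m α - mfp false h (m - Pi.single i 1) α)
      = ((α i : ℕ) : ℝ) * mfp false h m (α - eps n i) := by
  rw [mfp_split false h (m - Pi.single i 1) α i, mfp_split false h m α i,
    mfp_split false h m (α - eps n i) i,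
    erase_prod_eq false h i (fun j hj => coord_sub' m hj) α α (fun _ _ => rfl),
    erase_prod_eq false h i (fun j _ => rfl) (α - eps n i) α (fun j hj => sub_eps_other α hj)]
  have hx : (((m - Pi.single i 1 : Fin n → ℤ) i : ℤ) : ℝ) * h = (m i : ℝ) * h - h := by
    rw [coord_sub]; push_cast; ring
  rw [hx, sub_eps_self]
  cases hα : α i with
  | zero => simp [factPow_zero]
  | succ t =>
    rw [Nat.succ_sub_one, ← sub_mul, factPow_diff_false]
    field_simp
    push_cast; ring

lemma fdiff_mfp (σ : Bool) {h : ℝ} (hh : h ≠ 0) (i : Fin n) (α : Idx n) (a : Cl n) :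
    fdiff σ h i (fun m => mfp σ h m α • a)
      = fun m => ((α i : ℕ) : ℝ) • (mfp σ h m (α - eps n i) • a) := by
  funext m
  cases σ with
  | true =>
    show h⁻¹ • (mfp true h (m + Pi.single i 1) α • a - mfp true h m α • a) = _
    rw [← sub_smul, smul_smul, mfp_coeff_true hh m α i, ← smul_smul]
  | false =>
    show h⁻¹ • (mfp false h m α • a - mfp false h (m - Pi.single i 1) α • a) = _
    rw [← sub_smul, smul_smul, mfp_coeff_false hh m α i, ← smul_smul]

lemma vecCl_mul (σ : Bool) (h : ℝ) (m : Fin n → ℤ) (α : Idx n) (a : Cl n) :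
    vecCl n h m * (mfp σ h m α • a)
      = ∑ i, (mfp σ h m (α + eps n i) • (eCl n i * a)
        + ((sgn σ * h) * ((α i : ℕ) : ℝ)) • (mfp σ h m α • (eCl n i * a))) := by
  rw [vecCl, Finset.sum_mul]
  refine Finset.sum_congr rfl fun i _ => ?_
  rw [smul_mul_assoc, mul_smul_comm, smul_smul]
  have hco : ((m i : ℝ) * h) * mfp σ h m α
      = mfp σ h m (α + eps n i) + (sgn σ * h * ((α i : ℕ) : ℝ)) * mfp σ h m α := by
    rw [mfp_split σ h m α i, mfp_split σ h m (α + eps n i) i,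
      erase_prod_eq σ h i (fun j _ => rfl) (α + eps n i) α (fun j hj => add_eps_other α hj),
      add_eps_self, ← mul_assoc, factPow_mul_x σ h ((m i : ℝ) * h) (α i)]
    ring
  rw [hco, add_smul, ← smul_smul]

def degFinset (n k : ℕ) : Finset (Idx n) :=
  (Fintype.piFinset fun _ : Fin n => Finset.range (k + 1)).filter (fun α => deg α ≤ k)

lemma mem_degFinset {k : ℕ} {α : Idx n} : α ∈ degFinset n k ↔ deg α ≤ k := by
  constructor
  · exact fun hα => (Finset.mem_filter.mp hα).2
  · intro hα
    refine Finset.mem_filter.mpr ⟨Fintype.mem_piFinset.mpr fun i => Finset.mem_range.mpr ?_, hα⟩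
    have : α i ≤ deg α := Finset.single_le_sum (f := α) (fun j _ => Nat.zero_le _) (Finset.mem_univ i)
    omega

def Theta (σ : Bool) (h : ℝ) (k : ℕ) (w : Wm n) : (Fin n → ℤ) → Cl n :=
  fun m => ∑ α ∈ degFinset n k, mfp σ h m α • w α

def sing (α : Idx n) (a : Cl n) : Wm n := fun β => if β = α then a else 0

lemma Theta_zero (σ : Bool) (h : ℝ) (k : ℕ) : Theta σ h k (0 : Wm n) = 0 := by
  funext m; simp [Theta]

lemma Theta_smul (σ : Bool) (h : ℝ) (k : ℕ) (c : ℝ) (w : Wm n) :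
    Theta σ h k (c • w) = c • Theta σ h k w := by
  funext m; simp [Theta, Finset.smul_sum, smul_comm c]

lemma Theta_sum {ι : Type*} (σ : Bool) (h : ℝ) (k : ℕ) (t : Finset ι) (f : ι → Wm n) :
    Theta σ h k (∑ s ∈ t, f s) = ∑ s ∈ t, Theta σ h k (f s) := by
  funext m
  simp only [Theta, Finset.sum_apply, Finset.smul_sum]
  rw [Finset.sum_comm]

lemma wle_sing {k : ℕ} {α : Idx n} (hα : deg α ≤ k) (a : Cl n) : Wle n k (sing α a) := by
  intro β hβ
  rw [sing]
  split
  · rename_i hba; subst hba; omega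
  · rfl

lemma wle_decomp {k : ℕ} {w : Wm n} (hw : Wle n k w) :
    w = ∑ α ∈ degFinset n k, sing α (w α) := by
  funext β
  rw [Finset.sum_apply]
  have : ∀ α ∈ degFinset n k, sing α (w α) β = if β = α then w α else 0 := fun α _ => rfl
  rw [Finset.sum_congr rfl this, Finset.sum_ite_eq (degFinset n k) β w]
  split
  · rfl
  · rename_i hβ
    refine hw β ?_
    by_contra hc
    exact hβ (mem_degFinset.mpr (by omega))

lemma Theta_add (σ : Bool) (h : ℝ) (k : ℕ) (u v : Wm n) :
    Theta σ h k (u + v) = Theta σ h k u + Theta σ h k v := by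
  funext m; simp [Theta, smul_add, Finset.sum_add_distrib]

lemma Theta_sing (σ : Bool) (h : ℝ) {k : ℕ} {α : Idx n} (hα : deg α ≤ k) (a : Cl n) :
    Theta σ h k (sing α a) = fun m => mfp σ h m α • a := by
  funext m
  rw [Theta]
  have : ∀ β ∈ degFinset n k, mfp σ h m β • sing α a β
      = if β = α then mfp σ h m β • a else 0 := by
    intro β _
    rw [sing]
    split <;> simp
  rw [Finset.sum_congr rfl this, Finset.sum_ite_eq' (degFinset n k) α, if_pos (mem_degFinset.mpr hα)]

lemma Theta_mono (σ : Bool) (h : ℝ) {k K : ℕ} {w : Wm n} (hw : Wle n k w) (hkK : k ≤ K) :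
    Theta σ h K w = Theta σ h k w := by
  funext m
  rw [Theta, Theta]
  refine (Finset.sum_subset (fun α hα => mem_degFinset.mpr (le_trans (mem_degFinset.mp hα) hkK))
    fun α hαK hαk => ?_).symm
  rw [hw α (by have := mem_degFinset.not.mp hαk; omega), smul_zero]

-- Dirac linearity
lemma fdiff_add (σ : Bool) (h : ℝ) (i : Fin n) (f g : (Fin n → ℤ) → Cl n) :
    fdiff σ h i (f + g) = fdiff σ h i f + fdiff σ h i g := by
  funext m
  cases σ <;> simp [fdiff, smul_sub, smul_add] <;> abel

lemma fdiff_smul (σ : Bool) (h : ℝ) (c : ℝ) (i : Fin n) (f : (Fin n → ℤ) → Cl n) :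
    fdiff σ h i (c • f) = c • fdiff σ h i f := by
  funext m
  cases σ <;> simp [fdiff, smul_sub, smul_comm c] <;> abel

lemma Dirac_add (σ : Bool) (h : ℝ) (f g : (Fin n → ℤ) → Cl n) :
    Dirac n σ h (f + g) = Dirac n σ h f + Dirac n σ h g := by
  funext m; simp [Dirac, fdiff_add, mul_add, Finset.sum_add_distrib]

lemma Dirac_smul (σ : Bool) (h : ℝ) (c : ℝ) (f : (Fin n → ℤ) → Cl n) :
    Dirac n σ h (c • f) = c • Dirac n σ h f := by
  funext m; simp [Dirac, fdiff_smul, mul_smul_comm, Finset.smul_sum]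

lemma Dirac_sum {ι : Type*} (σ : Bool) (h : ℝ) (t : Finset ι) (f : ι → (Fin n → ℤ) → Cl n) :
    Dirac n σ h (∑ s ∈ t, f s) = ∑ s ∈ t, Dirac n σ h (f s) := by
  classical
  induction t using Finset.induction_on with
  | empty =>
    funext m; simp [Dirac, fdiff]
  | insert a t' hx ih => rw [Finset.sum_insert hx, Dirac_add, ih, Finset.sum_insert hx]

lemma deg_sub_le (α : Idx n) (i : Fin n) : deg (α - eps n i) ≤ deg α :=
  Finset.sum_le_sum fun l _ => Nat.sub_le _ _

lemma Dm_sing (α : Idx n) (a : Cl n) :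
    Dm n (sing α a) = ∑ i, ((α i : ℕ) : ℝ) • sing (α - eps n i) (eCl n i * a) := by
  funext β
  rw [Dm, Finset.sum_apply]
  refine Finset.sum_congr rfl fun i _ => ?_
  simp only [Pi.smul_apply]
  by_cases hba : β + eps n i = α
  · have h1 : α i = β i + 1 := by rw [← hba, add_eps_self]
    have h2 : β = α - eps n i := by rw [← hba, add_sub_eps]
    rw [sing, if_pos hba, sing, if_pos h2, h1]
  · rw [sing, if_neg hba, mul_zero, smul_zero, sing]
    rcases Nat.eq_zero_or_pos (α i) with h0 | h1
    · rw [h0]; simp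
    · rw [if_neg fun hb : β = α - eps n i => hba (by rw [hb, sub_add_eps h1]), smul_zero]

lemma X0_sing (α : Idx n) (a : Cl n) :
    X0 n (sing α a) = ∑ i, sing (α + eps n i) (eCl n i * a) := by
  funext β
  rw [X0, Finset.sum_apply]
  refine Finset.sum_congr rfl fun i _ => ?_
  by_cases hb : β = α + eps n i
  · subst hb
    rw [if_pos (by rw [add_eps_self]; omega), add_sub_eps, sing, if_pos rfl, sing, if_pos rfl]
  · simp only [sing, if_neg hb]
    split
    · rename_i hg
      rw [if_neg fun hs : β - eps n i = α => hb (by rw [← hs, sub_add_eps hg]), mul_zero]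
    · rfl

lemma Nm_sing (α : Idx n) (a : Cl n) :
    Nm n (sing α a) = ∑ i, ((α i : ℕ) : ℝ) • sing α (eCl n i * a) := by
  funext β
  rw [Nm, Finset.sum_apply]
  refine Finset.sum_congr rfl fun i _ => ?_
  simp only [Pi.smul_apply]
  by_cases hb : β = α
  · subst hb; rw [sing, if_pos rfl, sing, if_pos rfl]
  · rw [sing, if_neg hb, sing, if_neg hb, mul_zero, smul_zero, smul_zero]

lemma Dirac_Theta_sing (σ : Bool) {h : ℝ} (hh : h ≠ 0) {k : ℕ} {α : Idx n}
    (hα : deg α ≤ k) (a : Cl n) :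
    Dirac n σ h (Theta σ h k (sing α a)) = Theta σ h k (Dm n (sing α a)) := by
  rw [Theta_sing σ h hα, Dm_sing, Theta_sum]
  funext m
  rw [Dirac, Finset.sum_apply]
  refine Finset.sum_congr rfl fun i _ => ?_
  rw [fdiff_mfp σ hh i α a]
  rw [Theta_smul, Pi.smul_apply,
    Theta_sing σ h (le_trans (deg_sub_le α i) hα) (eCl n i * a)]
  rw [mul_smul_comm, mul_smul_comm]

lemma Dirac_Theta (σ : Bool) {h : ℝ} (hh : h ≠ 0) {k : ℕ} {w : Wm n} (hw : Wle n k w) :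
    Dirac n σ h (Theta σ h k w) = Theta σ h k (Dm n w) := by
  have hd := wle_decomp hw
  rw [hd, Theta_sum, Dirac_sum, Dm_sum, Theta_sum]
  exact Finset.sum_congr rfl fun α hα => Dirac_Theta_sing σ hh (mem_degFinset.mp hα) (w α)

lemma Theta_Xc_sing (σ : Bool) (h : ℝ) {k : ℕ} {α : Idx n} (hα : deg α ≤ k) (a : Cl n) :
    Theta σ h (k + 1) (Xc n (sgn σ * h) (sing α a))
      = fun m => vecCl n h m * Theta σ h k (sing α a) m := by
  have hXc : Xc n (sgn σ * h) (sing α a)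
      = (∑ i, sing (α + eps n i) (eCl n i * a))
        + (sgn σ * h) • ∑ i, ((α i : ℕ) : ℝ) • sing α (eCl n i * a) := by
    rw [show Xc n (sgn σ * h) (sing α a)
        = X0 n (sing α a) + (sgn σ * h) • Nm n (sing α a) from rfl, X0_sing, Nm_sing]
  rw [hXc, Theta_add, Theta_sum, Theta_smul, Theta_sum, Theta_sing σ h hα]
  funext m
  rw [vecCl_mul σ h m α a]
  simp only [Pi.add_apply, Finset.sum_apply, Pi.smul_apply]
  rw [Finset.smul_sum, ← Finset.sum_add_distrib]
  refine Finset.sum_congr rfl fun i _ => ?_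
  rw [Theta_sing σ h (by rw [deg_add_eps]; omega) (eCl n i * a),
    Theta_smul, Pi.smul_apply, Theta_sing σ h (by omega) (eCl n i * a)]
  rw [smul_smul]

lemma Theta_Xc (σ : Bool) (h : ℝ) {k : ℕ} {w : Wm n} (hw : Wle n k w) :
    Theta σ h (k + 1) (Xc n (sgn σ * h) w)
      = fun m => vecCl n h m * Theta σ h k w m := by
  have hd := wle_decomp hw
  rw [hd, Xc_sum, Theta_sum, Theta_sum]
  funext m
  rw [Finset.sum_apply, Finset.sum_apply, Finset.mul_sum]
  refine Finset.sum_congr rfl fun α hα => ?_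
  rw [Theta_Xc_sing σ h (mem_degFinset.mp hα) (w α)]

lemma Theta_iter (σ : Bool) (h : ℝ) {j : ℕ} {u : Wm n} (hu : Wle n j u) (s : ℕ) :
    Theta σ h (j + s) ((Xc n (sgn σ * h))^[s] u)
      = fun m => vecCl n h m ^ s * Theta σ h j u m := by
  induction s with
  | zero => funext m; simp
  | succ s ih =>
    have h1 : (Xc n (sgn σ * h))^[s + 1] u = Xc n (sgn σ * h) ((Xc n (sgn σ * h))^[s] u) :=
      Function.iterate_succ_apply' _ _ _
    have h2 : Wle n (j + s) ((Xc n (sgn σ * h))^[s] u) := wle_Xc_iter _ s hu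
    have h3 : j + (s + 1) = (j + s) + 1 := by omega
    rw [h1, h3, Theta_Xc σ h h2, ih]
    funext m
    rw [pow_succ']
    rw [mul_assoc]

lemma Theta_mem_PiLe (σ : Bool) (h : ℝ) {j : ℕ} {w : Wm n} (hw : Wle n j w) :
    Theta σ h j w ∈ PiLe n σ h j := by
  have : Theta σ h j w = ∑ α ∈ degFinset n j, (fun m => mfp σ h m α • w α) := by
    funext m; rw [Theta, Finset.sum_apply]
  rw [this]
  refine Submodule.sum_mem _ fun α hα => Submodule.subset_span ?_
  exact ⟨α, w α, mem_degFinset.mp hα, rfl⟩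

lemma PiLe_repr (σ : Bool) (h : ℝ) {k : ℕ} {P : (Fin n → ℤ) → Cl n} (hP : P ∈ PiLe n σ h k) :
    ∃ w : Wm n, Wle n k w ∧ P = Theta σ h k w := by
  refine Submodule.span_induction ?_ ?_ ?_ ?_ hP
  · rintro f ⟨α, a, hαk, rfl⟩
    exact ⟨sing α a, wle_sing hαk a, (Theta_sing σ h hαk a).symm⟩
  · exact ⟨0, fun β _ => rfl, (Theta_zero σ h k).symm⟩
  · rintro f g _ _ ⟨u, hu, rfl⟩ ⟨v, hv, rfl⟩
    refine ⟨u + v, fun β hβ => ?_, (Theta_add σ h k u v).symm⟩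
    simp [hu β hβ, hv β hβ]
  · rintro c f _ ⟨u, hu, rfl⟩
    refine ⟨c • u, fun β hβ => ?_, (Theta_smul σ h k c u).symm⟩
    simp [hu β hβ]

end Fischer

/-- Theorem 3.4 (Fischer decomposition): every `P ∈ Π_k^±` decomposes as
`P = Σ_{s=0}^k (mh)^s M_s` with each `M_s ∈ Π_{k-s}^±` discrete monogenic. -/
theorem fischer_decomposition (n : ℕ) (hn : 1 ≤ n) (h : ℝ) (hh : 0 < h) (σ : Bool)
    (k : ℕ) (P : (Fin n → ℤ) → Cl n) (hP : P ∈ PiLe n σ h k) :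
    ∃ M : ℕ → ((Fin n → ℤ) → Cl n),
      (∀ s ≤ k, M s ∈ PiLe n σ h (k - s) ∧ Dirac n σ h (M s) = 0) ∧
      P = fun m => ∑ s ∈ range (k + 1), (vecCl n h m) ^ s * M s m := by
  obtain ⟨w, hwle, rfl⟩ := Fischer.PiLe_repr σ h hP
  obtain ⟨M, hM, hw⟩ := Fischer.model_fischer hn (sgn σ * h) k w hwle
  refine ⟨fun s => Fischer.Theta σ h (k - s) (M s), fun s _ => ?_, ?_⟩
  · refine ⟨Fischer.Theta_mem_PiLe σ h (hM s).1, ?_⟩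
    rw [Fischer.Dirac_Theta σ (ne_of_gt hh) (hM s).1, (hM s).2, Fischer.Theta_zero]
  · conv_lhs => rw [hw]
    rw [Fischer.Theta_sum]
    funext m
    rw [Finset.sum_apply]
    refine Finset.sum_congr rfl fun s hs => ?_
    have hsk : s ≤ k := by have := Finset.mem_range.mp hs; omega
    calc Fischer.Theta σ h k ((Fischer.Xc n (sgn σ * h))^[s] (M s)) m
        = Fischer.Theta σ h ((k - s) + s) ((Fischer.Xc n (sgn σ * h))^[s] (M s)) m := by
          rw [Nat.sub_add_cancel hsk]
      _ = vecCl n h m ^ s * Fischer.Theta σ h (k - s) (M s) m := by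
          rw [Fischer.Theta_iter σ h (hM s).1 s]
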